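/- Let G ∈ 𝔗_a and let P = P_0,…,P_ℓ be a maximal path in G. Then for every 1 ≤ i ≤ ℓ, the two-vertex sequence P_{i-1}, P_i is the only path in G starting in P_{i-1} and ending in P_i. In particular, if G is additionally reflexive, then ι(P_{i-1},P_i)_G = 2 for all 1 ≤ i ≤ ℓ. -/

import Mathlib

/-- A finite digraph: a finite nonempty vertex set `V ⊆ ℕ` together with an
arc set `A ⊆ V × V`. -/
structure Dgraph where
  V : Finset ℕ
  nonempty : V.Nonempty
  A : Finset (ℕ × ℕ)
  A_sub : ∀ p ∈ A, p.1 ∈ V ∧ p.2 ∈ V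

namespace Dgraph

/-- The set of proper arcs of `G`, i.e. the arc set of `G*`. -/
def Astar (G : Dgraph) : Finset (ℕ × ℕ) := G.A.filter (fun p => p.1 ≠ p.2)

/-- `G` is reflexive. -/
def IsRefl (G : Dgraph) : Prop := ∀ v ∈ G.V, (v, v) ∈ G.A

/-- `p` is a path in `G` (a nonempty list of pairwise distinct vertices,
consecutive ones joined by arcs).  Its length as a path is `p.length - 1`. -/
def IsPath (G : Dgraph) (p : List ℕ) : Prop :=
  p ≠ [] ∧ p.Nodup ∧ (∀ v ∈ p, v ∈ G.V) ∧ p.Chain' (fun v w => (v, w) ∈ G.A)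

/-- `p` is a path in `G*`. -/
def IsPathStar (G : Dgraph) (p : List ℕ) : Prop :=
  p ≠ [] ∧ p.Nodup ∧ (∀ v ∈ p, v ∈ G.V) ∧ p.Chain' (fun v w => (v, w) ∈ G.A ∧ v ≠ w)

/-- `G*` contains a closed walk. -/
def HasClosedWalkStar (G : Dgraph) : Prop :=
  ∃ p : List ℕ, (∀ v ∈ p, v ∈ G.V) ∧ p.Chain' (fun v w => (v, w) ∈ G.A ∧ v ≠ w) ∧
    2 ≤ p.length ∧ p.head? = p.getLast?

/-- membership in the class `𝔗ₐ`: `G*` is acyclic. -/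
def MemTa (G : Dgraph) : Prop := ¬ G.HasClosedWalkStar

/-- The height of `G`: the maximal length of a path in `G`. -/
noncomputable def height (G : Dgraph) : ℕ :=
  sSup {n | ∃ p, G.IsPath p ∧ p.length = n + 1}

/-- The interval `[v,w]_G`. -/
def interval (G : Dgraph) (v w : ℕ) : Finset ℕ :=
  G.V.filter (fun z => (v, z) ∈ G.A ∧ (z, w) ∈ G.A)

/-- `ι(v,w)_G`, the cardinality of the interval `[v,w]_G`. -/
def iota (G : Dgraph) (v w : ℕ) : ℕ := (G.interval v w).card

/-- The set `𝓗(G,H)` of homomorphisms from `G` to `H` (represented as total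
maps `ℕ → ℕ`, normalized to `0` outside of `V(G)`). -/
def Hom (G H : Dgraph) : Set (ℕ → ℕ) :=
  {f | (∀ v ∈ G.V, f v ∈ H.V) ∧ (∀ p ∈ G.A, (f p.1, f p.2) ∈ H.A) ∧
    ∀ v, v ∉ G.V → f v = 0}

/-- The set `𝓢(G,H)` of strict homomorphisms from `G` to `H`. -/
def SHom (G H : Dgraph) : Set (ℕ → ℕ) :=
  {f ∈ Hom G H | ∀ p ∈ G.Astar, f p.1 ≠ f p.2}

/-- `μ_ξ(G)`, for a homomorphism `ξ` from `G` into `H`. -/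
def mu (G H : Dgraph) (f : ℕ → ℕ) : ℕ :=
  ∑ p ∈ G.Astar, H.iota (f p.1) (f p.2)

/-- `L` is a subgraph of `G`. -/
def Subgraph (L G : Dgraph) : Prop := L.V ⊆ G.V ∧ L.A ⊆ G.A

/-- Restriction of a map to a vertex set (normalized to `0` outside). -/
def restrict (X : Finset ℕ) (f : ℕ → ℕ) : ℕ → ℕ := fun x => if x ∈ X then f x else 0

/-- `𝓜(L,H)`: homomorphisms from `L` to `H` with maximal `μ`. -/
def MSet (L H : Dgraph) : Set (ℕ → ℕ) :=
  {f ∈ Hom L H | ∀ g ∈ Hom L H, mu L H g ≤ mu L H f}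

/-- `𝓜^𝓛(G,H)`. -/
def MLSet (G H : Dgraph) (𝓛 : Set Dgraph) : Set (ℕ → ℕ) :=
  {f ∈ Hom G H | ∀ L ∈ 𝓛, restrict L.V f ∈ MSet L H}

/-- `𝓙^𝓛_{G,H'}(ξ)` for `ξ ∈ 𝓗(G,H)`. -/
def JSet (G H H' : Dgraph) (𝓛 : Set Dgraph) (ξ : ℕ → ℕ) : Set (ℕ → ℕ) :=
  {ζ ∈ Hom G H' | ∀ L ∈ 𝓛, ∀ p ∈ L.Astar,
    H'.iota (ζ p.1) (ζ p.2) = H.iota (ξ p.1) (ξ p.2)}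

/-- The digraph `P_×` of a path `P = P_0, …, P_ℓ`: vertex set `{P_0,…,P_ℓ}`
and arcs `P_{i-1}P_i`. -/
def pathGraph (P : List ℕ) (h : P ≠ []) : Dgraph where
  V := P.toFinset
  nonempty := by
    obtain ⟨a, t, rfl⟩ := List.exists_cons_of_ne_nil h
    exact ⟨a, by simp⟩
  A := (P.zip P.tail).toFinset
  A_sub := by
    intro p hp
    rw [List.mem_toFinset] at hp
    have h1 := List.of_mem_zip hp
    exact ⟨List.mem_toFinset.mpr h1.1, List.mem_toFinset.mpr (List.mem_of_mem_tail h1.2)⟩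

/-- `𝓛(G)`: the set of the digraphs `P_×` for the paths `P` of length `h_G` in `G`. -/
def LSet (G : Dgraph) : Set Dgraph :=
  {D | ∃ (P : List ℕ) (h : P ≠ []), G.IsPath P ∧ P.length = G.height + 1 ∧
    D = pathGraph P h}

/-- The class `𝕽`: reflexive digraphs `R ∈ 𝔗ₐ` with
`𝓜^{𝓛(R)}(R,R) ∩ 𝓢(R,R) ≠ ∅`. -/
def MemR (R : Dgraph) : Prop :=
  R.MemTa ∧ R.IsRefl ∧ (MLSet R R (LSet R) ∩ SHom R R).Nonempty

/-- `G` is a poset: reflexive, antisymmetric and transitive. -/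
def IsPoset (G : Dgraph) : Prop :=
  G.IsRefl ∧ (∀ v w, (v, w) ∈ G.A → (w, v) ∈ G.A → v = w) ∧
    (∀ u v w, (u, v) ∈ G.A → (v, w) ∈ G.A → (u, w) ∈ G.A)

/-- The class `𝔗ₐ^{=n}`: digraphs in `𝔗ₐ` of height `n` in which every vertex
lies on a path of length `n`. -/
def MemTaEq (n : ℕ) (G : Dgraph) : Prop :=
  G.MemTa ∧ G.height = n ∧ ∀ v ∈ G.V, ∃ p, G.IsPath p ∧ p.length = n + 1 ∧ v ∈ p

/-- A maximal path in `G`: no path in `G` properly contains its vertex set. -/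
def MaximalPath (G : Dgraph) (P : List ℕ) : Prop :=
  G.IsPath P ∧ ∀ Q, G.IsPath Q → (∀ v ∈ P, v ∈ Q) → ∀ v ∈ Q, v ∈ P

end Dgraph

open Dgraph


private lemma chain'_and {α : Type*} {R S : α → α → Prop} :
    ∀ {l : List α}, l.Chain' R → l.Chain' S → l.Chain' (fun a b => R a b ∧ S a b)
  | [], _, _ => List.IsChain.nil
  | [_], _, _ => List.IsChain.singleton _
  | a :: b :: l, h1, h2 => by
    unfold List.Chain' at h1 h2 ⊢
    rw [List.isChain_cons_cons] at h1 h2 ⊢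
    exact ⟨⟨h1.1, h2.1⟩, chain'_and h1.2 h2.2⟩

private lemma chain'_glue {α : Type*} {R : α → α → Prop} {xs ys : List α} {m : α}
    (h1 : List.Chain' R (xs ++ [m])) (h2 : List.Chain' R (m :: ys)) :
    List.Chain' R (xs ++ m :: ys) := by
  unfold List.Chain' at h1 h2 ⊢
  rw [List.isChain_append] at h1 ⊢
  refine ⟨h1.1, h2, ?_⟩
  intro x hx y hy
  simp only [List.head?_cons, Option.mem_def, Option.some.injEq] at hy
  subst hy
  exact h1.2.2 x hx m (by simp)

private lemma starChain {G : Dgraph} {l : List ℕ} (hnd : l.Nodup)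
    (hch : l.Chain' (fun v w => (v, w) ∈ G.A)) :
    l.Chain' (fun v w => (v, w) ∈ G.A ∧ v ≠ w) :=
  chain'_and hch (List.Pairwise.isChain hnd)

private lemma main_aux (G : Dgraph) (hG : G.MemTa) (S T : List ℕ) (a b : ℕ)
    (hP : MaximalPath G (S ++ a :: b :: T)) :
    ∀ Q, G.IsPath Q → Q.head? = some a → Q.getLast? = some b → Q = [a, b] := by
  obtain ⟨⟨hPne, hPnd, hPV, hPch⟩, hmax⟩ := hP
  have hab : a ≠ b := by
    have h := hPnd
    simp [List.nodup_append, List.nodup_cons] at h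
    tauto
  intro Q hQpath hhead hlast
  obtain ⟨hQne, hQnd, hQV, hQch⟩ := hQpath
  obtain ⟨rest, rfl⟩ : ∃ rest, Q = a :: rest := by
    obtain ⟨q, rest, rfl⟩ := List.exists_cons_of_ne_nil hQne
    have hq : q = a := by simpa using hhead
    exact ⟨rest, by rw [hq]⟩
  rcases eq_or_ne rest [] with rfl | hrest
  · exfalso
    simp [List.getLast?] at hlast
    exact hab hlast
  · obtain ⟨M, hM⟩ : ∃ M, rest = M ++ [b] := by
      refine ⟨rest.dropLast, ?_⟩
      have h1 := List.getLast?_eq_getLast (l := a :: rest) (by simp)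
      rw [hlast] at h1
      have h2 : (a :: rest).getLast (by simp) = rest.getLast hrest :=
        List.getLast_cons hrest
      have h3 : rest.getLast hrest = b := by
        rw [← h2]; exact (Option.some_injective _ h1).symm
      rw [← h3]
      exact (List.dropLast_append_getLast hrest).symm
    subst hM
    suffices hMnil : M = [] by simp [hMnil]
    by_contra hMne
    -- Step A: every vertex of M avoids P
    have chQ : (a :: (M ++ [b])).Chain' (fun v w => (v, w) ∈ G.A ∧ v ≠ w) :=
      starChain hQnd hQch
    have chP : (S ++ a :: b :: T).Chain' (fun v w => (v, w) ∈ G.A ∧ v ≠ w) :=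
      starChain hPnd hPch
    have hza : ∀ z ∈ M, z ≠ a := by
      intro z hz
      have := hQnd
      simp [List.nodup_cons, List.nodup_append] at this
      intro h; subst h; exact this.1.1 hz
    have hzb : ∀ z ∈ M, z ≠ b := by
      intro z hz
      have := hQnd
      simp [List.nodup_cons, List.nodup_append] at this
      intro h; subst h; exact this.2.2 _ hz rfl
    have stepA : ∀ z ∈ M, z ∉ S ++ a :: b :: T := by
      intro z hzM hzP
      obtain ⟨M1, M2, hMsplit⟩ := List.append_of_mem hzM
      have hzmem : z ∈ S ∨ z = a ∨ z = b ∨ z ∈ T := by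
        simpa [List.mem_append, List.mem_cons] using hzP
      rcases hzmem with hzS | h | h | hzT
      · -- closed walk through S-part and Q-prefix
        obtain ⟨S1, S2, hS⟩ := List.append_of_mem hzS
        have h1 : ((z :: S2) ++ [a]).Chain' (fun v w => (v, w) ∈ G.A ∧ v ≠ w) :=
          chP.infix ⟨S1, b :: T, by simp [hS]⟩
        have h2 : (a :: (M1 ++ [z])).Chain' (fun v w => (v, w) ∈ G.A ∧ v ≠ w) :=
          chQ.prefix ⟨M2 ++ [b], by simp [hMsplit]⟩
        refine hG ⟨(z :: S2) ++ a :: (M1 ++ [z]), ?_, chain'_glue h1 h2, ?_, ?_⟩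
        · intro w hw
          simp only [List.mem_append, List.mem_cons] at hw
          have hwPQ : w ∈ S ++ a :: b :: T ∨ w ∈ a :: (M ++ [b]) := by
            simp only [hS, hMsplit, List.mem_append, List.mem_cons]
            tauto
          rcases hwPQ with h | h
          · exact hPV w h
          · exact hQV w h
        · simp only [List.length_append, List.length_cons]
          omega
        · have he : (z :: S2) ++ a :: (M1 ++ [z]) = ((z :: S2) ++ a :: M1) ++ [z] := by
            simp
          rw [he, List.getLast?_concat]
          simp
      · exact hza z hzM h
      · exact hzb z hzM h
      · obtain ⟨T1, T2, hT⟩ := List.append_of_mem hzT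
        have h1 : ((z :: M2) ++ [b]).Chain' (fun v w => (v, w) ∈ G.A ∧ v ≠ w) :=
          chQ.infix ⟨a :: M1, [], by simp [hMsplit]⟩
        have h2 : (b :: (T1 ++ [z])).Chain' (fun v w => (v, w) ∈ G.A ∧ v ≠ w) :=
          chP.infix ⟨S ++ [a], T2, by simp [hT]⟩
        refine hG ⟨(z :: M2) ++ b :: (T1 ++ [z]), ?_, chain'_glue h1 h2, ?_, ?_⟩
        · intro w hw
          simp only [List.mem_append, List.mem_cons] at hw
          have hwPQ : w ∈ S ++ a :: b :: T ∨ w ∈ a :: (M ++ [b]) := by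
            simp only [hT, hMsplit, List.mem_append, List.mem_cons]
            tauto
          rcases hwPQ with h | h
          · exact hPV w h
          · exact hQV w h
        · simp only [List.length_append, List.length_cons]
          omega
        · have he : (z :: M2) ++ b :: (T1 ++ [z]) = ((z :: M2) ++ b :: T1) ++ [z] := by
            simp
          rw [he, List.getLast?_concat]
          simp
    -- Step B: splice M into P and contradict maximality
    obtain ⟨z, hz⟩ := List.exists_mem_of_ne_nil M hMne
    have hzS : z ∉ S := fun h => stepA z hz (by simp [h])
    set P' : List ℕ := S ++ a :: (M ++ b :: T) with hP'def
    have hch1 : (S ++ [a]).Chain' (fun v w => (v, w) ∈ G.A) :=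
      hPch.prefix ⟨b :: T, by simp⟩
    have hch2 : (b :: T).Chain' (fun v w => (v, w) ∈ G.A) :=
      hPch.infix ⟨S ++ [a], [], by simp⟩
    have hchQ' : (a :: (M ++ [b])).Chain' (fun v w => (v, w) ∈ G.A) := hQch
    have hchP' : P'.Chain' (fun v w => (v, w) ∈ G.A) := by
      have step1 : (S ++ a :: (M ++ [b])).Chain' (fun v w => (v, w) ∈ G.A) :=
        chain'_glue hch1 hchQ'
      have step2 : ((S ++ a :: M) ++ [b]).Chain' (fun v w => (v, w) ∈ G.A) := by
        have : (S ++ a :: M) ++ [b] = S ++ a :: (M ++ [b]) := by simp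
        rw [this]; exact step1
      have := chain'_glue step2 hch2
      have heq : (S ++ a :: M) ++ b :: T = P' := by simp [hP'def]
      rw [heq] at this; exact this
    have hP'path : G.IsPath P' := by
      refine ⟨by simp [hP'def], ?_, ?_, hchP'⟩
      · -- Nodup
        have hMnd : M.Nodup := by
          have h := hQnd
          rw [List.nodup_cons, List.nodup_append] at h
          exact h.2.1
        have haM : a ∉ M := fun h => hza a h rfl
        have hPnd' := hPnd
        rw [List.nodup_append, List.nodup_cons, List.nodup_cons] at hPnd'
        obtain ⟨hSnd, ⟨habT, hbT, hTnd⟩, hSdisj⟩ := hPnd'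
        simp only [hP'def]
        rw [List.nodup_append, List.nodup_cons, List.nodup_append, List.nodup_cons]
        refine ⟨hSnd, ⟨?_, hMnd, ⟨hbT, hTnd⟩, ?_⟩, ?_⟩
        · intro h
          rcases List.mem_append.mp h with h | h
          · exact haM h
          · exact habT h
        · intro x hx y hx2 hxy; subst hxy
          rcases List.mem_cons.mp hx2 with h | h
          · exact hzb x hx h
          · exact stepA x hx (by simp [h])
        · intro x hxS y hx2 hxy; subst hxy
          rcases List.mem_cons.mp hx2 with h | h
          · exact hSdisj x hxS x (by simp [h]) rfl
          · rcases List.mem_append.mp h with h | h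
            · exact stepA x h (by simp [hxS])
            · exact hSdisj x hxS x (by simp [List.mem_cons.mp h]) rfl
      · intro v hv
        simp only [hP'def, List.mem_append, List.mem_cons] at hv
        rcases hv with h | rfl | h | rfl | h
        · exact hPV v (by simp [h])
        · exact hPV v (by simp)
        · exact hQV v (by simp [h])
        · exact hPV v (by simp)
        · exact hPV v (by simp [h])
    have hsub : ∀ v ∈ S ++ a :: b :: T, v ∈ P' := by
      intro v hv
      simp only [List.mem_append, List.mem_cons] at hv
      simp only [hP'def, List.mem_append, List.mem_cons]
      tauto
    have hback := hmax P' hP'path hsub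
    have hzP' : z ∈ P' := by
      simp only [hP'def, List.mem_append, List.mem_cons]
      tauto
    exact stepA z hz (hback z hzP')

theorem stmt_15 (G : Dgraph) (hG : G.MemTa) (P : List ℕ) (hP : MaximalPath G P) :
    (∀ i, 1 ≤ i → i < P.length →
      ∀ Q : List ℕ, G.IsPath Q → Q.head? = some (P.getD (i - 1) 0) →
        Q.getLast? = some (P.getD i 0) → Q = [P.getD (i - 1) 0, P.getD i 0]) ∧
    (G.IsRefl → ∀ i, 1 ≤ i → i < P.length →
      G.iota (P.getD (i - 1) 0) (P.getD i 0) = 2) := by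
  have decomp : ∀ i, 1 ≤ i → i < P.length →
      P = P.take (i - 1) ++ P.getD (i - 1) 0 :: P.getD i 0 :: P.drop (i + 1) := by
    intro i h1 h2
    have hi1 : i - 1 < P.length := lt_of_le_of_lt (Nat.sub_le i 1) h2
    rw [List.getD_eq_getElem _ _ hi1, List.getD_eq_getElem _ _ h2]
    conv_lhs => rw [← List.take_append_drop (i - 1) P]
    congr 1
    rw [List.drop_eq_getElem_cons hi1, Nat.sub_add_cancel h1,
      List.drop_eq_getElem_cons h2]
  have part1 : ∀ i, 1 ≤ i → i < P.length →
      ∀ Q : List ℕ, G.IsPath Q → Q.head? = some (P.getD (i - 1) 0) →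
        Q.getLast? = some (P.getD i 0) → Q = [P.getD (i - 1) 0, P.getD i 0] := by
    intro i h1 h2 Q hQ hh hl
    have hP' := hP
    rw [decomp i h1 h2] at hP'
    exact main_aux G hG _ _ _ _ hP' Q hQ hh hl
  refine ⟨part1, ?_⟩
  intro hrefl i h1 h2
  set a := P.getD (i - 1) 0 with ha
  set b := P.getD i 0 with hb
  have hd := decomp i h1 h2
  rw [← ha, ← hb] at hd
  have hchain := hP.1.2.2.2
  have harc : (a, b) ∈ G.A := by
    rw [hd] at hchain
    have := hchain.infix (l₁ := [a, b]) ⟨P.take (i - 1), P.drop (i + 1), by simp⟩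
    exact List.isChain_pair.mp this
  have haV : a ∈ G.V := hP.1.2.2.1 a (by rw [hd]; simp)
  have hbV : b ∈ G.V := hP.1.2.2.1 b (by rw [hd]; simp)
  have hab : a ≠ b := by
    have hnd := hP.1.2.1
    rw [hd] at hnd
    simp [List.nodup_append, List.nodup_cons] at hnd
    tauto
  have hint : G.interval a b = {a, b} := by
    ext z
    simp only [interval, Finset.mem_filter, Finset.mem_insert, Finset.mem_singleton]
    constructor
    · rintro ⟨hzV, hz1, hz2⟩
      by_contra hcon
      push_neg at hcon
      have hpath : G.IsPath [a, z, b] := by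
        refine ⟨by simp, ?_, ?_, ?_⟩
        · have e1 : a ≠ z := Ne.symm hcon.1
          simp [List.nodup_cons, hab, e1, hcon.2]
        · intro v hv
          simp at hv
          rcases hv with rfl | rfl | rfl
          · exact haV
          · exact hzV
          · exact hbV
        · simp [List.Chain', List.isChain_cons_cons]
          exact ⟨hz1, hz2⟩
      have := part1 i h1 h2 [a, z, b] hpath (by rw [← ha]; simp) (by rw [← hb]; simp)
      rw [← ha, ← hb] at this
      simp at this
    · rintro (rfl | rfl)
      · exact ⟨haV, hrefl a haV, harc⟩
      · exact ⟨hbV, harc, hrefl b hbV⟩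
  rw [iota, hint, Finset.card_insert_of_notMem (by simp [hab]),
    Finset.card_singleton]
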